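/- Let ℓ : ℝ^d × F → ℝ be continuous with F compact, ∇_x ℓ continuous in (x,y), and suppose that for every x all maximizers y, y' ∈ argmax_{y∈F} ℓ(x,y) satisfy ∇_x ℓ(x,y) = ∇_x ℓ(x,y'). Then h(x) := max_{y∈F} ℓ(x,y) is differentiable with ∇h(x) = ∇_x ℓ(x, y*) for any maximizer y*. -/

import Mathlib

open Set Metric InnerProductSpace

set_option maxHeartbeats 1000000

/-- **Generalized Danskin theorem.** Let `ℓ : ℝ^d × F → ℝ` be continuous with `F`
compact, `∇_x ℓ` jointly continuous, and suppose for each `x` the gradient `∇_x ℓ(x,·)`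
is constant on the set of maximizers. Then `h(x) = max_{y∈F} ℓ(x,y)` is differentiable
with `∇h(x) = ∇_x ℓ(x, y*)` for any maximizer `y*`. -/
theorem generalized_danskin {d : ℕ} {F : Type*} [TopologicalSpace F] [CompactSpace F]
    [Nonempty F]
    (ℓ : EuclideanSpace ℝ (Fin d) × F → ℝ) (hcont : Continuous ℓ)
    (G : EuclideanSpace ℝ (Fin d) → F → EuclideanSpace ℝ (Fin d))
    (hgrad : ∀ x y, HasGradientAt (fun x' => ℓ (x', y)) (G x y) x)
    (hGcont : Continuous fun q : EuclideanSpace ℝ (Fin d) × F => G q.1 q.2)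
    (hsame : ∀ x y y', IsMaxOn (fun z => ℓ (x, z)) Set.univ y →
      IsMaxOn (fun z => ℓ (x, z)) Set.univ y' → G x y = G x y')
    (x : EuclideanSpace ℝ (Fin d)) (ystar : F)
    (hy : IsMaxOn (fun z => ℓ (x, z)) Set.univ ystar) :
    HasGradientAt (fun x' => ⨆ y, ℓ (x', y)) (G x ystar) x := by
  set g : (EuclideanSpace ℝ (Fin d)) := G x ystar with hg
  -- the sup equals the value at any maximizer
  have hmax : ∀ (x' : (EuclideanSpace ℝ (Fin d))) (y' : F), IsMaxOn (fun z => ℓ (x', z)) Set.univ y' →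
      (⨆ y, ℓ (x', y)) = ℓ (x', y') := by
    intro x' y' H
    refine le_antisymm (ciSup_le fun y => H (mem_univ y)) ?_
    exact le_ciSup ⟨ℓ (x', y'), by rintro _ ⟨y, rfl⟩; exact H (mem_univ y)⟩ y'
  -- existence of maximizers
  have hexmax : ∀ x' : (EuclideanSpace ℝ (Fin d)), ∃ y', IsMaxOn (fun z => ℓ (x', z)) Set.univ y' := by
    intro x'
    obtain ⟨y', -, H⟩ := isCompact_univ.exists_isMaxOn univ_nonempty
      (hcont.comp (Continuous.prodMk_right x')).continuousOn
    exact ⟨y', fun z hz => by simpa using H hz⟩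
  rw [hasGradientAt_iff_isLittleO, Asymptotics.isLittleO_iff]
  intro c hc
  -- the open set of y's with gradient close to g
  set U : Set F := {y | ‖G x y - g‖ < c / 2} with hU
  have hUopen : IsOpen U :=
    isOpen_lt (((hGcont.comp (Continuous.prodMk_right x)).sub continuous_const).norm)
      continuous_const
  have hUmax : ∀ y, IsMaxOn (fun z => ℓ (x, z)) Set.univ y → y ∈ U := by
    intro y H
    have : G x y = g := hsame x y ystar H hy
    simp [hU, this, half_pos hc]
  -- Step A: maximizers at nearby points lie in U
  have stepA : ∃ V1 ∈ nhds x, ∀ x' ∈ V1, ∀ y',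
      IsMaxOn (fun z => ℓ (x', z)) Set.univ y' → y' ∈ U := by
    rcases eq_empty_or_nonempty Uᶜ with hC | hC
    · exact ⟨Set.univ, Filter.univ_mem, fun x' _ y' H => by
        by_contra h; exact (hC ▸ h : y' ∈ (∅ : Set F))⟩
    · obtain ⟨yC, hyC, hC2⟩ := (hUopen.isClosed_compl.isCompact).exists_isMaxOn hC
        (hcont.comp (Continuous.prodMk_right x)).continuousOn
      have hm_lt : ℓ (x, yC) < ℓ (x, ystar) := by
        have hle : ℓ (x, yC) ≤ ℓ (x, ystar) := hy (mem_univ yC)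
        rcases hle.lt_or_eq with h | h
        · exact h
        · exfalso
          apply hyC
          apply hUmax
          intro z _
          calc ℓ (x, z) ≤ ℓ (x, ystar) := hy (mem_univ z)
            _ = ℓ (x, yC) := h.symm
      set b : ℝ := (ℓ (x, ystar) + ℓ (x, yC)) / 2 with hb
      have hmb : ℓ (x, yC) < b := by rw [hb]; linarith
      have hbs : b < ℓ (x, ystar) := by rw [hb]; linarith
      have hO1 : IsOpen {p : (EuclideanSpace ℝ (Fin d)) × F | ℓ p < b} := isOpen_lt hcont continuous_const
      have hsub : ({x} : Set (EuclideanSpace ℝ (Fin d))) ×ˢ Uᶜ ⊆ {p : (EuclideanSpace ℝ (Fin d)) × F | ℓ p < b} := by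
        rintro ⟨x1, y1⟩ ⟨hx1, hy1⟩
        simp only [mem_singleton_iff] at hx1
        subst hx1
        exact lt_of_le_of_lt (hC2 hy1) hmb
      obtain ⟨v, w, hvo, hwo, hxv, hCw, hvw⟩ := generalized_tube_lemma
        isCompact_singleton hUopen.isClosed_compl.isCompact hO1 hsub
      refine ⟨v ∩ {x' | b < ℓ (x', ystar)}, ?_, ?_⟩
      · apply Filter.inter_mem (hvo.mem_nhds (hxv rfl))
        exact (isOpen_lt continuous_const
          (hcont.comp (continuous_id.prodMk continuous_const))).mem_nhds hbs
      · rintro x' ⟨hx'v, hx'b⟩ y' H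
        by_contra hy'
        have h1 : ℓ (x', y') < b := hvw ⟨hx'v, hCw hy'⟩
        have h3 : b < ℓ (x', ystar) := hx'b
        have h2 : ℓ (x', ystar) ≤ ℓ (x', y') := H (mem_univ ystar)
        linarith
  -- Step B: G is uniformly close to G x · on a neighborhood
  have stepB : ∃ V2 ∈ nhds x, ∀ z ∈ V2, ∀ y : F, ‖G z y - G x y‖ < c / 2 := by
    have hO3 : IsOpen {p : (EuclideanSpace ℝ (Fin d)) × F | ‖G p.1 p.2 - G x p.2‖ < c / 2} := by
      apply isOpen_lt _ continuous_const
      exact (hGcont.sub (hGcont.comp (continuous_const.prodMk continuous_snd))).norm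
    have hsub : ({x} : Set (EuclideanSpace ℝ (Fin d))) ×ˢ (univ : Set F) ⊆
        {p : (EuclideanSpace ℝ (Fin d)) × F | ‖G p.1 p.2 - G x p.2‖ < c / 2} := by
      rintro ⟨x1, y1⟩ ⟨hx1, -⟩
      simp only [mem_singleton_iff] at hx1
      subst hx1
      simp [half_pos hc]
    obtain ⟨v, w, hvo, -, hxv, hw, hvw⟩ := generalized_tube_lemma
      isCompact_singleton isCompact_univ hO3 hsub
    refine ⟨v, hvo.mem_nhds (hxv rfl), fun z hz y => ?_⟩
    have : (z, y) ∈ {p : (EuclideanSpace ℝ (Fin d)) × F | ‖G p.1 p.2 - G x p.2‖ < c / 2} :=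
      hvw (Set.mk_mem_prod hz (hw (mem_univ y)))
    exact this
  obtain ⟨V1, hV1, hV1p⟩ := stepA
  obtain ⟨V2, hV2, hV2p⟩ := stepB
  obtain ⟨r, hr, hball⟩ := Metric.mem_nhds_iff.1 (Filter.inter_mem hV1 hV2)
  -- key mean value estimate
  have key : ∀ y' ∈ U, ∀ x' ∈ ball x r,
      |ℓ (x', y') - ℓ (x, y') - inner ℝ g (x' - x)| ≤ c * ‖x' - x‖ := by
    intro y' hy' x' hx'
    set f : (EuclideanSpace ℝ (Fin d)) → ℝ := fun z => ℓ (z, y') - (toDual ℝ (EuclideanSpace ℝ (Fin d)) g) z with hf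
    have hderiv : ∀ z ∈ ball x r, HasFDerivWithinAt f
        ((toDual ℝ (EuclideanSpace ℝ (Fin d)) (G z y' - g) : (EuclideanSpace ℝ (Fin d)) →L[ℝ] ℝ)) (ball x r) z := by
      intro z hz
      have h1 : HasFDerivAt f (toDual ℝ (EuclideanSpace ℝ (Fin d)) (G z y') - toDual ℝ (EuclideanSpace ℝ (Fin d)) g) z :=
        ((hgrad z y').hasFDerivAt).sub ((toDual ℝ (EuclideanSpace ℝ (Fin d)) g).hasFDerivAt)
      rw [← map_sub] at h1
      exact h1.hasFDerivWithinAt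
    have hbound : ∀ z ∈ ball x r, ‖(toDual ℝ (EuclideanSpace ℝ (Fin d)) (G z y' - g) : (EuclideanSpace ℝ (Fin d)) →L[ℝ] ℝ)‖ ≤ c := by
      intro z hz
      have h1 : ‖G z y' - G x y'‖ < c / 2 := hV2p z (hball hz).2 y'
      have h2 : ‖G x y' - g‖ < c / 2 := hy'
      have h3 : ‖G z y' - g‖ ≤ ‖G z y' - G x y'‖ + ‖G x y' - g‖ := by
        simpa [dist_eq_norm] using dist_triangle (G z y') (G x y') g
      have h4 : ‖(toDual ℝ (EuclideanSpace ℝ (Fin d)) (G z y' - g) : (EuclideanSpace ℝ (Fin d)) →L[ℝ] ℝ)‖ = ‖G z y' - g‖ :=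
        (toDual ℝ (EuclideanSpace ℝ (Fin d))).norm_map _
      rw [h4]; linarith
    have hx0 : x ∈ ball x r := mem_ball_self hr
    have := (convex_ball x r).norm_image_sub_le_of_norm_hasFDerivWithin_le
      hderiv hbound hx0 hx'
    have heq : f x' - f x = ℓ (x', y') - ℓ (x, y') - inner ℝ g (x' - x) := by
      simp only [hf, toDual_apply_apply]
      rw [inner_sub_right]
      ring
    rw [Real.norm_eq_abs, heq] at this
    exact this
  -- assemble
  rw [Filter.eventually_iff_exists_mem]
  refine ⟨ball x r, ball_mem_nhds x hr, fun x' hx' => ?_⟩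
  obtain ⟨y', hy'⟩ := hexmax x'
  have hy'U : y' ∈ U := hV1p x' (hball hx').1 y' hy'
  have hysU : ystar ∈ U := hUmax ystar hy
  have e1 : (⨆ y, ℓ (x', y)) = ℓ (x', y') := hmax x' y' hy'
  have e2 : (⨆ y, ℓ (x, y)) = ℓ (x, ystar) := hmax x ystar hy
  have k1 := key y' hy'U x' hx'
  have k2 := key ystar hysU x' hx'
  have l1 : ℓ (x, y') ≤ ℓ (x, ystar) := hy (mem_univ y')
  have l2 : ℓ (x', ystar) ≤ ℓ (x', y') := hy' (mem_univ ystar)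
  rw [Real.norm_eq_abs, abs_le]
  rw [abs_le] at k1 k2
  simp only [e1, e2]
  constructor
  · linarith [k2.1]
  · linarith [k1.2]
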